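/- Let Γ = (E_{ij})_{i≤n, j≤N} be an n×N random matrix with i.i.d. symmetric exponential entries of variance 1. Then there exist absolute constants c, C > 0 such that c(n + ln N) ≤ E‖Γ : ℓ₁^N → ℓ₁^n‖ ≤ C(n + ln N), where ‖Γ : ℓ₁^N → ℓ₁^n‖ = max_{j≤N} Σ_{i=1}^n |E_{ij}| is the operator norm of Γ from ℓ₁^N to ℓ₁^n. -/

import Mathlib

open MeasureTheory ProbabilityTheory Real

noncomputable section

/-- The density of a symmetric exponential random variable with variance 1. -/
def symExpPDF (x : ℝ) : ℝ := (2:ℝ) ^ (-(1/2 : ℝ)) * Real.exp (-(Real.sqrt 2) * |x|)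

/-- `X` is a symmetric exponential random variable with variance 1. -/
def IsSymExp {Ω : Type*} [MeasureSpace Ω] (X : Ω → ℝ) : Prop :=
  Measure.map X ℙ = volume.withDensity (fun x => ENNReal.ofReal (symExpPDF x))

/-- The family `E` consists of i.i.d. symmetric exponential random variables with variance 1. -/
def IIDSymExp {Ω : Type*} [MeasureSpace Ω] {ι : Type*} (E : ι → Ω → ℝ) : Prop :=
  iIndepFun E ℙ ∧ ∀ i, IsSymExp (E i)

/-- The Euclidean norm on `ι → ℝ`. -/
def eNorm {ι : Type*} [Fintype ι] (x : ι → ℝ) : ℝ := Real.sqrt (∑ i, (x i)^2)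

/-- The ℓ∞ (sup) norm on `ι → ℝ`. -/
def supNorm {ι : Type*} [Fintype ι] (x : ι → ℝ) : ℝ := ⨆ i, |x i|

/-- The Euclidean (ℓ₂) metric. -/
def rho2 {ι : Type*} [Fintype ι] (x y : ι → ℝ) : ℝ := eNorm (x - y)

/-- The ℓ∞ metric. -/
def rhoInf {ι : Type*} [Fintype ι] (x y : ι → ℝ) : ℝ := supNorm (x - y)

/-- An origin-symmetric convex body: convex, compact, symmetric, with 0 in the interior. -/
def IsSymmConvexBody {ι : Type*} [Fintype ι] (K : Set (ι → ℝ)) : Prop :=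
  Convex ℝ K ∧ IsCompact K ∧ (∀ x ∈ K, -x ∈ K) ∧ 0 ∈ interior K

/-- The polar body `K° = {x : ⟨x,y⟩ ≤ 1 for all y ∈ K}`. -/
def polarSet {ι : Type*} [Fintype ι] (K : Set (ι → ℝ)) : Set (ι → ℝ) :=
  {x | ∀ y ∈ K, ∑ i, x i * y i ≤ 1}

/-- The operator norm `‖M : K → L‖` of a matrix `M` from the gauge of `K` to the gauge of `L`. -/
def opNormKL {n N : ℕ} (K : Set (Fin N → ℝ)) (L : Set (Fin n → ℝ))
    (M : Matrix (Fin n) (Fin N) ℝ) : ℝ :=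
  ⨆ x ∈ K, gauge L (M.mulVec x)

/-- `R(K) = ‖Id : K → B₂‖`, the Euclidean circumradius of `K`. -/
def RK {ι : Type*} [Fintype ι] (K : Set (ι → ℝ)) : ℝ := ⨆ x ∈ K, eNorm x

/-- A random vector is log-concave if it has a log-concave density with respect to Lebesgue
measure. -/
def IsLogConcaveVec {Ω : Type*} [MeasureSpace Ω] {ι : Type*} [Fintype ι]
    (X : Ω → ι → ℝ) : Prop :=
  ∃ f : (ι → ℝ) → ℝ, (∀ x, 0 ≤ f x) ∧
    (∀ x y : ι → ℝ, ∀ l : ℝ, 0 ≤ l → l ≤ 1 →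
      f x ^ (1 - l) * f y ^ l ≤ f ((1 - l) • x + l • y)) ∧
    Measure.map X ℙ = volume.withDensity (fun x => ENNReal.ofReal (f x))

/-- A random vector is isotropic if all linear marginals are centered with
`E⟨X,y⟩² = |y|²`. -/
def IsIsotropicVec {Ω : Type*} [MeasureSpace Ω] {ι : Type*} [Fintype ι]
    (X : Ω → ι → ℝ) : Prop :=
  (∀ y : ι → ℝ, (∫ ω, (∑ i, X ω i * y i)) = 0) ∧
  (∀ y : ι → ℝ, (∫ ω, (∑ i, X ω i * y i)^2) = ∑ i, (y i)^2)

/-- A random vector is unconditional if its law is invariant under sign flips of the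
coordinates. -/
def IsUnconditionalVec {Ω : Type*} [MeasureSpace Ω] {ι : Type*} [Fintype ι]
    (X : Ω → ι → ℝ) : Prop :=
  ∀ ε : ι → ℝ, (∀ i, ε i = 1 ∨ ε i = -1) →
    Measure.map (fun ω i => ε i * X ω i) ℙ = Measure.map X ℙ

/-- A random `n × N` matrix viewed as a random vector in `ℝ^{nN}`. -/
def matToVec {Ω : Type*} {n N : ℕ} (Γ : Ω → Matrix (Fin n) (Fin N) ℝ) :
    Ω → (Fin n × Fin N) → ℝ :=
  fun ω p => Γ ω p.1 p.2

/-- `x` is `m`-sparse: it has at most `m` nonzero coordinates. -/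
def SparseLe {ι : Type*} (m : ℕ) (x : ι → ℝ) : Prop :=
  ∃ s : Finset ι, s.card ≤ m ∧ ∀ i ∉ s, x i = 0

/-- Talagrand's `γ_q` functional of a set `T` with respect to a distance `ρ`;
the infimum runs over admissible sequences of (nonempty, finite) subsets of `T`. -/
def gammaQ {α : Type*} (q : ℝ) (T : Set α) (ρ : α → α → ℝ) : ℝ :=
  ⨅ A : {A : ℕ → Finset α //
      (∀ s, (A s).Nonempty ∧ ↑(A s) ⊆ T) ∧ (A 0).card = 1 ∧
      ∀ s, (A s).card ≤ 2 ^ 2 ^ s},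
    ⨆ x ∈ T, ∑' s : ℕ, (2:ℝ) ^ (((s:ℝ) + 1) / q) * (⨅ a ∈ A.1 (s + 1), ρ x a)

/-- `Γ_{k,m}`: the supremum of the Euclidean operator norms of the `k × m` submatrices of `M`. -/
def Gkm {n N : ℕ} (M : Matrix (Fin n) (Fin N) ℝ) (k m : ℕ) : ℝ :=
  ⨆ J : {J : Finset (Fin n) // J.card = k},
    ⨆ I : {I : Finset (Fin N) // I.card = m},
      ⨆ x : {x : Fin N → ℝ // eNorm x ≤ 1 ∧ ∀ j ∉ I.1, x j = 0},
        Real.sqrt (∑ i ∈ J.1, (M.mulVec x.1 i) ^ 2)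

/-- `f` is a norm on `ι → ℝ`. -/
def IsNorm {ι : Type*} [Fintype ι] (f : (ι → ℝ) → ℝ) : Prop :=
  (∀ x, 0 ≤ f x) ∧ (∀ x, f x = 0 → x = 0) ∧
  (∀ (c : ℝ) (x : ι → ℝ), f (c • x) = |c| * f x) ∧ ∀ x y, f (x + y) ≤ f x + f y

/-- The Banach–Mazur distance from `K` to the Euclidean ball. -/
def bmDist {ι : Type*} [Fintype ι] (K : Set (ι → ℝ)) : ℝ :=
  sInf {α : ℝ | 1 ≤ α ∧ ∃ T : (ι → ℝ) ≃ₗ[ℝ] (ι → ℝ),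
    (∀ x, eNorm x ≤ 1 → T x ∈ K) ∧ ∀ y ∈ K, ∃ x, eNorm x ≤ 1 ∧ y = α • (T x)}

/-- The set `K ⊗ L' = {x ⊗ y : x ∈ K, y ∈ L'}` of rank-one matrices. -/
def tensorSet {n N : ℕ} (K : Set (Fin N → ℝ)) (L' : Set (Fin n → ℝ)) :
    Set (Matrix (Fin n) (Fin N) ℝ) :=
  {M | ∃ x ∈ K, ∃ y ∈ L', M = Matrix.of fun i j => y i * x j}

/-- The entries of a random matrix, as a family of real random variables. -/
def matEntries {Ω : Type*} {n N : ℕ} (Γ : Ω → Matrix (Fin n) (Fin N) ℝ) :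
    (Fin n × Fin N) → Ω → ℝ :=
  fun p ω => Γ ω p.1 p.2

open scoped NNReal ENNReal
open Set

namespace ExpAux

lemma sqrt2_pos : (0:ℝ) < Real.sqrt 2 := Real.sqrt_pos.2 (by norm_num)

lemma sqrt2_sq : Real.sqrt 2 * Real.sqrt 2 = 2 := Real.mul_self_sqrt (by norm_num)

lemma sqrt2_le : Real.sqrt 2 ≤ 1.5 := by
  rw [show (1.5:ℝ) = Real.sqrt (1.5^2) from (Real.sqrt_sq (by norm_num)).symm]
  exact Real.sqrt_le_sqrt (by norm_num)

lemma symExpPDF_eq (x : ℝ) :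
    symExpPDF x = (Real.sqrt 2)⁻¹ * Real.exp (-(Real.sqrt 2 * |x|)) := by
  rw [symExpPDF, Real.rpow_neg (by norm_num), ← Real.sqrt_eq_rpow, neg_mul]

lemma symExpPDF_nonneg (x : ℝ) : 0 ≤ symExpPDF x := by
  rw [symExpPDF_eq]; positivity

lemma measurable_symExpPDF : Measurable symExpPDF := by
  unfold symExpPDF; fun_prop

lemma continuous_symExpPDF : Continuous symExpPDF := by
  unfold symExpPDF; fun_prop

lemma integrable_comp_abs' {f : ℝ → ℝ} (hf : IntegrableOn f (Ioi 0))
    (hm : AEStronglyMeasurable (fun x => f |x|) volume) :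
    Integrable (fun x => f |x|) volume := by
  have int_Ioi : IntegrableOn (fun x => f |x|) (Ioi 0) := by
    refine (integrableOn_congr_fun (fun x hx => ?_) measurableSet_Ioi).2 hf
    rw [abs_of_pos hx]
  have int_Iic : IntegrableOn (fun x ↦ f |x|) (Iic 0) := by
    rw [← Measure.map_neg_eq_self (volume : Measure ℝ)]
    have m : MeasurableEmbedding fun x : ℝ => -x :=
      (Homeomorph.neg ℝ).measurableEmbedding
    rw [m.integrableOn_map_iff]
    simp_rw [Function.comp_def, abs_neg, neg_preimage, neg_Iic, neg_zero]
    exact Iff.mpr integrableOn_Ici_iff_integrableOn_Ioi int_Ioi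
  have := int_Iic.union int_Ioi
  rwa [Iic_union_Ioi, integrableOn_univ] at this

lemma integral_exp_neg_mul_Ioi {a t : ℝ} (ha : 0 < a) :
    ∫ x in Ioi t, Real.exp (-(a * x)) = Real.exp (-(a * t)) / a := by
  have h := integral_comp_mul_left_Ioi (fun y => Real.exp (-y)) t ha
  simp only [smul_eq_mul] at h
  rw [h, integral_exp_neg_Ioi]
  field_simp

lemma integrableOn_exp_neg_mul {a t : ℝ} (ha : 0 < a) :
    IntegrableOn (fun x => Real.exp (-(a * x))) (Ioi t) := by
  simpa [neg_mul] using exp_neg_integrableOn_Ioi t ha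

lemma integral_id_mul_exp_neg_Ioi : ∫ x in Ioi (0:ℝ), x * Real.exp (-x) = 1 := by
  have h := Real.Gamma_eq_integral (by norm_num : (0:ℝ) < 2)
  have h2 : Real.Gamma 2 = 1 := by
    simpa using Real.Gamma_nat_eq_factorial 1
  rw [h2] at h
  have h3 : ∫ x in Ioi (0:ℝ), x * Real.exp (-x)
      = ∫ x in Ioi (0:ℝ), Real.exp (-x) * x ^ ((2:ℝ) - 1) := by
    refine setIntegral_congr_fun measurableSet_Ioi (fun x hx => ?_)
    rw [show (2:ℝ) - 1 = 1 by norm_num, Real.rpow_one, mul_comm]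
  rw [h3, ← h]

lemma integrableOn_id_mul_exp_neg_mul {a : ℝ} (ha : 0 < a) :
    IntegrableOn (fun x => x * Real.exp (-(a * x))) (Ioi (0:ℝ)) := by
  refine ((integrableOn_exp_neg_mul (a := a/2) (t := 0) (half_pos ha)).const_mul
    (2/a)).mono' ?_ ?_
  · exact (continuous_id.mul (by fun_prop)).aestronglyMeasurable
  · filter_upwards [ae_restrict_mem measurableSet_Ioi] with x hx
    have hx0 : (0:ℝ) < x := hx
    have h1 : a/2 * x ≤ Real.exp (a/2 * x) :=
      le_trans (by linarith [Real.add_one_le_exp (a/2*x)]) le_rfl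
    have h2 : x ≤ 2/a * Real.exp (a/2 * x) := by
      have := mul_le_mul_of_nonneg_left h1 (le_of_lt (by positivity : (0:ℝ) < 2/a))
      calc x = 2/a * (a/2 * x) := by field_simp
      _ ≤ 2/a * Real.exp (a/2 * x) := this
    have h3 : ‖x * Real.exp (-(a * x))‖ = x * Real.exp (-(a * x)) := by
      rw [Real.norm_eq_abs, abs_of_nonneg (by positivity)]
    rw [h3]
    have h4 : x * Real.exp (-(a * x)) ≤ 2/a * Real.exp (a/2*x) * Real.exp (-(a*x)) :=
      mul_le_mul_of_nonneg_right h2 (Real.exp_nonneg _)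
    calc x * Real.exp (-(a * x)) ≤ 2/a * Real.exp (a/2*x) * Real.exp (-(a*x)) := h4
    _ = 2/a * Real.exp (-(a/2 * x)) := by
        rw [mul_assoc, ← Real.exp_add]; ring_nf

lemma integral_id_mul_exp_neg_mul_Ioi {a : ℝ} (ha : 0 < a) :
    ∫ x in Ioi (0:ℝ), x * Real.exp (-(a * x)) = 1 / a^2 := by
  have h := integral_comp_mul_left_Ioi (fun y => y * Real.exp (-y)) 0 ha
  simp only [smul_eq_mul, mul_zero, integral_id_mul_exp_neg_Ioi, mul_one] at h
  have h2 : ∫ x in Ioi (0:ℝ), a * x * Real.exp (-(a * x)) =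
      a * ∫ x in Ioi (0:ℝ), x * Real.exp (-(a * x)) := by
    rw [← integral_const_mul]
    congr 1 with x; ring
  rw [h2] at h
  field_simp at h ⊢
  rw [pow_two]
  nlinarith [h]

end ExpAux



namespace ExpAux

/-- abbreviation for the symmetric exponential law -/
def expM : Measure ℝ := volume.withDensity fun x => ENNReal.ofReal (symExpPDF x)

lemma integral_expM (g : ℝ → ℝ) : ∫ x, g x ∂expM = ∫ x, symExpPDF x * g x := by
  have h0 : (fun x => ENNReal.ofReal (symExpPDF x))
      = fun x => ((Real.toNNReal (symExpPDF x) : ℝ≥0) : ℝ≥0∞) := rfl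
  rw [expM, h0, integral_withDensity_eq_integral_smul measurable_symExpPDF.real_toNNReal g]
  congr 1 with x
  rw [NNReal.smul_def, smul_eq_mul, Real.coe_toNNReal _ (symExpPDF_nonneg x)]

lemma integrable_expM {g : ℝ → ℝ}
    (h : Integrable (fun x => symExpPDF x * g x) volume) : Integrable g expM := by
  rw [expM, integrable_withDensity_iff measurable_symExpPDF.ennreal_ofReal
    (Filter.Eventually.of_forall fun x => ENNReal.ofReal_lt_top)]
  refine h.congr (Filter.Eventually.of_forall fun x => ?_)
  show symExpPDF x * g x = g x * (ENNReal.ofReal (symExpPDF x)).toReal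
  rw [ENNReal.toReal_ofReal (symExpPDF_nonneg x)]; ring

lemma integrable_pdf_mul_exp_abs {b : ℝ} (hb : b < Real.sqrt 2) (c : ℝ) :
    Integrable (fun x => symExpPDF x * (c * Real.exp (b * |x|))) volume := by
  have key : ∀ x : ℝ, symExpPDF x * (c * Real.exp (b * |x|))
      = ((Real.sqrt 2)⁻¹ * c) * Real.exp (-((Real.sqrt 2 - b) * |x|)) := by
    intro x
    have h1 : Real.exp (-(Real.sqrt 2 * |x|)) * Real.exp (b * |x|)
        = Real.exp (-((Real.sqrt 2 - b) * |x|)) := by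
      rw [← Real.exp_add]; congr 1; ring
    calc symExpPDF x * (c * Real.exp (b * |x|))
        = (Real.sqrt 2)⁻¹ * c *
          (Real.exp (-(Real.sqrt 2 * |x|)) * Real.exp (b * |x|)) := by
          rw [symExpPDF_eq]; ring
      _ = _ := by rw [h1]
  simp_rw [key]
  refine Integrable.const_mul ?_ _
  refine integrable_comp_abs' (integrableOn_exp_neg_mul (by linarith)) ?_
  exact (Continuous.aestronglyMeasurable (by fun_prop))

lemma integrable_pdf_mul_abs :
    Integrable (fun x => symExpPDF x * |x|) volume := by
  have key : ∀ x : ℝ, symExpPDF x * |x|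
      = (Real.sqrt 2)⁻¹ * (|x| * Real.exp (-(Real.sqrt 2 * |x|))) := by
    intro x; rw [symExpPDF_eq]; ring
  simp_rw [key]
  refine Integrable.const_mul ?_ _
  refine integrable_comp_abs' (integrableOn_id_mul_exp_neg_mul sqrt2_pos) ?_
  exact (Continuous.aestronglyMeasurable (by fun_prop))

lemma integral_pdf_mul_abs :
    ∫ x, symExpPDF x * |x| = (Real.sqrt 2)⁻¹ := by
  have key : ∀ x : ℝ, symExpPDF x * |x|
      = (Real.sqrt 2)⁻¹ * (|x| * Real.exp (-(Real.sqrt 2 * |x|))) := by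
    intro x; rw [symExpPDF_eq]; ring
  simp_rw [key]
  rw [integral_const_mul,
    integral_comp_abs (f := fun x => x * Real.exp (-(Real.sqrt 2 * x))),
    integral_id_mul_exp_neg_mul_Ioi sqrt2_pos]
  have h2 : Real.sqrt 2 ^ 2 = 2 := by rw [pow_two, sqrt2_sq]
  rw [h2]; norm_num

lemma integral_pdf_mul_exp_half :
    ∫ x, symExpPDF x * Real.exp (Real.sqrt 2 / 2 * |x|) = 2 := by
  have key : ∀ x : ℝ, symExpPDF x * Real.exp (Real.sqrt 2 / 2 * |x|)
      = (Real.sqrt 2)⁻¹ * Real.exp (-(Real.sqrt 2 / 2 * |x|)) := by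
    intro x
    have h1 : Real.exp (-(Real.sqrt 2 * |x|)) * Real.exp (Real.sqrt 2 / 2 * |x|)
        = Real.exp (-(Real.sqrt 2 / 2 * |x|)) := by
      rw [← Real.exp_add]; congr 1; ring
    calc symExpPDF x * Real.exp (Real.sqrt 2 / 2 * |x|)
        = (Real.sqrt 2)⁻¹ *
          (Real.exp (-(Real.sqrt 2 * |x|)) * Real.exp (Real.sqrt 2 / 2 * |x|)) := by
          rw [symExpPDF_eq]; ring
      _ = _ := by rw [h1]
  simp_rw [key]
  rw [integral_const_mul,
    integral_comp_abs (f := fun x => Real.exp (-(Real.sqrt 2 / 2 * x))),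
    integral_exp_neg_mul_Ioi (by positivity : (0:ℝ) < Real.sqrt 2 / 2)]
  rw [mul_zero, neg_zero, Real.exp_zero]
  have := sqrt2_pos
  field_simp
  rw [pow_two, sqrt2_sq]

lemma expM_Ioi_ge {t : ℝ} (ht : 0 ≤ t) :
    ENNReal.ofReal (Real.exp (-(Real.sqrt 2 * t)) / 2) ≤ expM (Ioi t) := by
  have hmeas : MeasurableSet (Ioi t) := measurableSet_Ioi
  rw [expM, withDensity_apply _ hmeas]
  have hint : IntegrableOn symExpPDF (Ioi t) volume := by
    have : Integrable symExpPDF volume := by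
      have := integrable_pdf_mul_exp_abs (b := 0) sqrt2_pos 1
      simpa using this
    exact this.integrableOn
  have h1 : ENNReal.ofReal (∫ x in Ioi t, symExpPDF x)
      = ∫⁻ x in Ioi t, ENNReal.ofReal (symExpPDF x) :=
    ofReal_integral_eq_lintegral_ofReal hint
      (Filter.Eventually.of_forall fun x => symExpPDF_nonneg x)
  rw [← h1]
  apply ENNReal.ofReal_le_ofReal
  have h2 : ∫ x in Ioi t, symExpPDF x
      = ∫ x in Ioi t, (Real.sqrt 2)⁻¹ * Real.exp (-(Real.sqrt 2 * x)) := by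
    refine setIntegral_congr_fun measurableSet_Ioi (fun x hx => ?_)
    rw [symExpPDF_eq, abs_of_pos (lt_of_le_of_lt ht hx)]
  rw [h2, integral_const_mul, integral_exp_neg_mul_Ioi sqrt2_pos]
  apply le_of_eq
  calc Real.exp (-(Real.sqrt 2 * t)) / 2
      = Real.exp (-(Real.sqrt 2 * t)) * (Real.sqrt 2 * Real.sqrt 2)⁻¹ := by
        rw [sqrt2_sq]; ring
    _ = (Real.sqrt 2)⁻¹ * (Real.exp (-(Real.sqrt 2 * t)) / Real.sqrt 2) := by
        rw [mul_inv]; ring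

lemma expM_ne_zero : expM ≠ 0 := by
  intro h
  have h2 := expM_Ioi_ge (le_refl (0:ℝ))
  rw [h] at h2
  simp only [Measure.coe_zero, Pi.zero_apply, nonpos_iff_eq_zero] at h2
  rw [ENNReal.ofReal_eq_zero] at h2
  nlinarith [Real.exp_pos (-(Real.sqrt 2 * 0))]

end ExpAux

namespace ExpAux

variable {Ω : Type} [MeasureSpace Ω]

lemma iIndepFun_congr {ι : Type*} {f f' : ι → Ω → ℝ}
    (hf : iIndepFun f ℙ) (h : ∀ i, f i =ᵐ[ℙ] f' i) :
    iIndepFun f' ℙ := by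
  rw [iIndepFun_iff_measure_inter_preimage_eq_mul] at hf ⊢
  intro S sets hsets
  have hae : ∀ᵐ ω ∂(ℙ : Measure Ω), ∀ i ∈ S, f i ω = f' i ω := by
    have h0 : ∀ᵐ ω ∂(ℙ : Measure Ω), ∀ i : S, f i ω = f' i ω :=
      ae_all_iff.2 fun i => h i
    exact h0.mono fun ω hω i hi => hω ⟨i, hi⟩
  have h1 : (ℙ : Measure Ω) (⋂ i ∈ S, f' i ⁻¹' sets i)
      = ℙ (⋂ i ∈ S, f i ⁻¹' sets i) := by
    refine measure_congr (Filter.eventuallyEq_set.2 (hae.mono fun ω hω => ?_))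
    simp only [Set.mem_iInter, Set.mem_preimage]
    constructor
    · intro hmem i hi; rw [hω i hi]; exact hmem i hi
    · intro hmem i hi; rw [← hω i hi]; exact hmem i hi
  have h2 : ∀ i ∈ S, (ℙ : Measure Ω) (f' i ⁻¹' sets i) = ℙ (f i ⁻¹' sets i) := by
    intro i hi
    refine measure_congr (Filter.eventuallyEq_set.2 (((h i).mono fun ω hω => ?_)))
    simp only [Set.mem_preimage, hω]
  rw [h1, hf S hsets]
  exact (Finset.prod_congr rfl h2).symm ▸ rfl

lemma iIndepFun_precomp {ι κ : Type*} {f : ι → Ω → ℝ}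
    (hf : iIndepFun f ℙ) (g : κ → ι)
    (hg : Function.Injective g) :
    iIndepFun (fun k => f (g k)) ℙ := by
  classical
  rw [iIndepFun_iff_measure_inter_preimage_eq_mul] at hf ⊢
  intro S sets hsets
  have hsets' : ∀ i ∈ S.image g,
      MeasurableSet (Function.extend g sets (fun _ => Set.univ) i) := by
    intro i hi
    rcases Finset.mem_image.1 hi with ⟨k, hk, rfl⟩
    rw [hg.extend_apply]
    exact hsets k hk
  have key := hf (S.image g) hsets'
  have e1 : (⋂ i ∈ S.image g, f i ⁻¹' Function.extend g sets (fun _ => Set.univ) i)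
      = ⋂ k ∈ S, f (g k) ⁻¹' sets k := by
    ext ω
    simp only [Set.mem_iInter, Finset.mem_image]
    constructor
    · intro hω k hk
      have := hω (g k) ⟨k, hk, rfl⟩
      rwa [hg.extend_apply] at this
    · rintro hω i ⟨k, hk, rfl⟩
      rw [hg.extend_apply]; exact hω k hk
  have e2 : ∏ i ∈ S.image g,
        (ℙ : Measure Ω) (f i ⁻¹' Function.extend g sets (fun _ => Set.univ) i)
      = ∏ k ∈ S, (ℙ : Measure Ω) (f (g k) ⁻¹' sets k) := by
    rw [Finset.prod_image (fun a _ b _ hab => hg hab)]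
    refine Finset.prod_congr rfl fun k _ => by rw [hg.extend_apply]
  rw [e1, e2] at key
  exact key

section RV

variable {X : Ω → ℝ} (hX : Measurable X) (hmap : Measure.map X ℙ = expM)

include hX hmap

lemma symExp_integral (g : ℝ → ℝ) (hg : Measurable g) :
    ∫ ω, g (X ω) ∂ℙ = ∫ x, symExpPDF x * g x := by
  have h1 : ∫ ω, g (X ω) ∂ℙ = ∫ x, g x ∂(Measure.map X ℙ) := by
    rw [integral_map hX.aemeasurable hg.aestronglyMeasurable]
  rw [h1, hmap, integral_expM]

lemma symExp_integrable {g : ℝ → ℝ} (hg : Measurable g)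
    (h : Integrable (fun x => symExpPDF x * g x) volume) :
    Integrable (fun ω => g (X ω)) ℙ := by
  have h2 : Integrable g expM := integrable_expM h
  rw [← hmap] at h2
  exact (integrable_map_measure hg.aestronglyMeasurable hX.aemeasurable).mp h2

lemma abs_integrable : Integrable (fun ω => |X ω|) ℙ :=
  symExp_integrable hX hmap measurable_abs integrable_pdf_mul_abs

lemma abs_integral : ∫ ω, |X ω| ∂ℙ = (Real.sqrt 2)⁻¹ :=
  (symExp_integral hX hmap _ measurable_abs).trans integral_pdf_mul_abs

lemma exp_abs_integrable :
    Integrable (fun ω => Real.exp (Real.sqrt 2 / 2 * |X ω|)) ℙ := by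
  refine symExp_integrable hX hmap
    (g := fun x => Real.exp (Real.sqrt 2 / 2 * |x|)) (by measurability) ?_
  have := integrable_pdf_mul_exp_abs (b := Real.sqrt 2 / 2)
    (by linarith [sqrt2_pos] : Real.sqrt 2 / 2 < Real.sqrt 2) 1
  simpa using this

lemma exp_abs_integral :
    ∫ ω, Real.exp (Real.sqrt 2 / 2 * |X ω|) ∂ℙ = 2 :=
  (symExp_integral hX hmap (fun x => Real.exp (Real.sqrt 2 / 2 * |x|))
    (by measurability)).trans integral_pdf_mul_exp_half

lemma tail_ge {t : ℝ} (ht : 0 ≤ t) :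
    ENNReal.ofReal (Real.exp (-(Real.sqrt 2 * t)) / 2) ≤ ℙ {ω | t < |X ω|} := by
  have hset : MeasurableSet {x : ℝ | t < |x|} :=
    measurableSet_lt measurable_const measurable_abs
  have h1 : (ℙ : Measure Ω) {ω | t < |X ω|} = (Measure.map X ℙ) {x | t < |x|} := by
    rw [Measure.map_apply hX hset]; rfl
  rw [h1, hmap]
  refine le_trans (expM_Ioi_ge ht) (measure_mono fun x hx => ?_)
  exact lt_of_lt_of_le hx (le_abs_self x)

end RV

end ExpAux

set_option maxHeartbeats 1000000 in
/-- The expected `ℓ₁^N → ℓ₁^n` operator norm of the exponential random matrix is of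
order `n + ln N`. -/
theorem exponential_matrix_l1_norm :
    ∃ c C : ℝ, 0 < c ∧ 0 < C ∧
      ∀ (n N : ℕ), 0 < n → 0 < N →
      ∀ (Ω : Type) [MeasureSpace Ω], IsProbabilityMeasure (ℙ : Measure Ω) →
      ∀ (Γ : Ω → Matrix (Fin n) (Fin N) ℝ), IIDSymExp (matEntries Γ) →
        c * ((n : ℝ) + Real.log N) ≤ (∫ ω, ⨆ j : Fin N, ∑ i : Fin n, |Γ ω i j|) ∧
        (∫ ω, ⨆ j : Fin N, ∑ i : Fin n, |Γ ω i j|) ≤ C * ((n : ℝ) + Real.log N) := by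
  classical
  refine ⟨1/6, 3, by norm_num, by norm_num, ?_⟩
  intro n N hn hN Ω _ hprob Γ hΓ
  haveI := hprob
  obtain ⟨hind, hexp⟩ := hΓ
  have hexp' : ∀ p : Fin n × Fin N, Measure.map (matEntries Γ p) ℙ = ExpAux.expM :=
    fun p => hexp p
  haveI : Nonempty (Fin N) := ⟨⟨0, hN⟩⟩
  haveI : Nonempty (Fin n) := ⟨⟨0, hn⟩⟩
  set κ : ℝ := Real.sqrt 2 with hκdef
  have hκ0 : 0 < κ := ExpAux.sqrt2_pos
  have hκsq : κ * κ = 2 := ExpAux.sqrt2_sq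
  have hκ15 : κ ≤ 1.5 := ExpAux.sqrt2_le
  -- measurable modifications of the entries
  have hAE : ∀ p : Fin n × Fin N, AEMeasurable (matEntries Γ p) ℙ := by
    intro p
    by_contra hcon
    have h1 := hexp' p
    rw [Measure.map_of_not_aemeasurable hcon] at h1
    exact ExpAux.expM_ne_zero h1.symm
  set X : Fin n × Fin N → Ω → ℝ := fun p => (hAE p).mk _ with hXdef
  have hXmeas : ∀ p, Measurable (X p) := fun p => (hAE p).measurable_mk
  have hXae : ∀ p : Fin n × Fin N, (matEntries Γ p) =ᵐ[ℙ] X p :=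
    fun p => (hAE p).ae_eq_mk
  have hXmap : ∀ p, Measure.map (X p) ℙ = ExpAux.expM := fun p =>
    ((Measure.map_congr (hXae p)).symm).trans (hexp' p)
  have hXind : iIndepFun X ℙ :=
    ExpAux.iIndepFun_congr hind hXae
  -- column sums and the max
  set S : Fin N → Ω → ℝ := fun j ω => ∑ i, |X (i, j) ω| with hSdef
  have hSmeas : ∀ j, Measurable (S j) :=
    fun j => Finset.measurable_sum _ (fun i _ => (hXmeas (i, j)).abs)
  have hSnn : ∀ j ω, 0 ≤ S j ω := fun j ω => Finset.sum_nonneg fun i _ => abs_nonneg _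
  have hSint : ∀ j, Integrable (S j) ℙ := fun j =>
    integrable_finset_sum _ (fun i _ => ExpAux.abs_integrable (hXmeas (i, j)) (hXmap (i, j)))
  set F : Ω → ℝ := fun ω => ⨆ j, S j ω with hFdef
  have hFmeas : Measurable F := by
    have h := Finset.measurable_sup' (s := (Finset.univ : Finset (Fin N)))
      Finset.univ_nonempty (f := S) (fun i _ => hSmeas i)
    have he : F = Finset.univ.sup' Finset.univ_nonempty S := by
      funext ω
      rw [Finset.sup'_apply, Finset.sup'_univ_eq_ciSup]
    rw [he]; exact h
  have hbdd : ∀ ω, BddAbove (Set.range fun j => S j ω) :=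
    fun ω => Set.Finite.bddAbove (Set.finite_range _)
  have hFge : ∀ j ω, S j ω ≤ F ω := fun j ω => le_ciSup (hbdd ω) j
  have hFnn : ∀ ω, 0 ≤ F ω := fun ω =>
    le_trans (hSnn (Classical.arbitrary _) ω) (hFge _ ω)
  have hFle : ∀ ω, F ω ≤ ∑ j, S j ω := fun ω =>
    ciSup_le fun j => Finset.single_le_sum (fun j' _ => hSnn j' ω) (Finset.mem_univ j)
  have hFint : Integrable F ℙ := by
    refine (integrable_finset_sum Finset.univ fun j _ => hSint j).mono'
      hFmeas.aestronglyMeasurable ?_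
    refine Filter.Eventually.of_forall fun ω => ?_
    rw [Real.norm_eq_abs, abs_of_nonneg (hFnn ω)]
    exact hFle ω
  -- replace the integrand
  have hcongr : (fun ω => ⨆ j : Fin N, ∑ i : Fin n, |Γ ω i j|) =ᵐ[ℙ] F := by
    have hall : ∀ᵐ ω ∂(ℙ : Measure Ω), ∀ p : Fin n × Fin N,
        Γ ω p.1 p.2 = X p ω := ae_all_iff.2 fun p : Fin n × Fin N => hXae p
    filter_upwards [hall] with ω hω
    have : (fun j : Fin N => ∑ i : Fin n, |Γ ω i j|) = fun j => S j ω := by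
      funext j
      exact Finset.sum_congr rfl fun i _ => by rw [hω (i, j)]
    rw [this]
  rw [integral_congr_ae hcongr]
  set I : ℝ := ∫ ω, F ω ∂ℙ with hIdef
  have hI0 : 0 ≤ I := integral_nonneg hFnn
  have hlogN : 0 ≤ Real.log N := Real.log_nonneg (by exact_mod_cast hN)
  have hn1 : (1:ℝ) ≤ (n:ℝ) := by exact_mod_cast hn
  have hN1 : (1:ℝ) ≤ (N:ℝ) := by exact_mod_cast hN
  have hNpos : (0:ℝ) < (N:ℝ) := by linarith
  have hlog2 : Real.log 2 ≤ 1 := by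
    have := Real.log_le_sub_one_of_pos (by norm_num : (0:ℝ) < 2)
    linarith
  have hlog2pos : 0 < Real.log 2 := Real.log_pos (by norm_num)
  constructor
  · -- LOWER BOUND
    -- part 1: I ≥ n/κ
    have hlow1 : (n:ℝ) / κ ≤ I := by
      have h1 : ∫ ω, S (⟨0, hN⟩ : Fin N) ω ∂ℙ = (n:ℝ) * κ⁻¹ := by
        rw [hSdef]
        rw [integral_finset_sum _ (fun i _ =>
          ExpAux.abs_integrable (hXmeas (i, ⟨0, hN⟩)) (hXmap (i, ⟨0, hN⟩)))]
        rw [Finset.sum_congr rfl (fun i _ =>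
          ExpAux.abs_integral (hXmeas (i, ⟨0, hN⟩)) (hXmap (i, ⟨0, hN⟩)))]
        simp [Finset.card_univ]
        exact Or.inl hκdef.symm
      have h2 := integral_mono (hSint ⟨0, hN⟩) hFint (fun ω => hFge ⟨0, hN⟩ ω)
      rw [h1] at h2
      rw [div_eq_mul_inv]
      exact h2
    -- part 2: I ≥ (log N / κ) / 3
    set t : ℝ := Real.log N / κ with htdef
    have ht0 : 0 ≤ t := div_nonneg hlogN hκ0.le
    have hlow2 : t / 3 ≤ I := by
      set i0 : Fin n := ⟨0, hn⟩
      set Y : Fin N → Ω → ℝ := fun j => X (i0, j) with hYdef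
      have hYmeas : ∀ j, Measurable (Y j) := fun j => hXmeas (i0, j)
      have hYind : iIndepFun Y ℙ :=
        ExpAux.iIndepFun_precomp hXind (fun j => (i0, j))
          (fun a b hab => congrArg Prod.snd hab)
      set B : Fin N → Set Ω := fun j => Y j ⁻¹' (Set.Icc (-t) t) with hBdef
      have hBmeas : ∀ j, MeasurableSet (B j) := fun j => (hYmeas j) measurableSet_Icc
      have hprod : (ℙ : Measure Ω) (⋂ j, B j) = ∏ j, ℙ (B j) := by
        have h := (iIndepFun_iff_measure_inter_preimage_eq_mul.1 hYind)
          Finset.univ (sets := fun _ => Set.Icc (-t) t)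
          (fun j _ => measurableSet_Icc)
        have he : (⋂ j ∈ (Finset.univ : Finset (Fin N)), Y j ⁻¹' Set.Icc (-t) t)
            = ⋂ j, B j := by simp [hBdef]
        rw [he] at h
        exact h
      -- single-coordinate tail bound
      have hsingle : ∀ j, ((ℙ : Measure Ω) (B j)).toReal ≤ 1 - 1/(2*N) := by
        intro j
        have htail := ExpAux.tail_ge (hYmeas j) (hXmap (i0, j)) ht0
        have hκt : κ * t = Real.log N := by
          rw [htdef]; field_simp
        rw [hκt] at htail
        have hexplog : Real.exp (-(Real.log (N:ℝ))) = (N:ℝ)⁻¹ := by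
          rw [Real.exp_neg, Real.exp_log hNpos]
        rw [hexplog] at htail
        have hsetmeas : MeasurableSet {ω | t < |Y j ω|} :=
          measurableSet_lt measurable_const (hYmeas j).abs
        have hcompl : B j = {ω | t < |Y j ω|}ᶜ := by
          ext ω
          simp only [hBdef, Set.mem_preimage, Set.mem_Icc, Set.mem_compl_iff,
            Set.mem_setOf_eq, not_lt]
          exact (abs_le).symm
        have hle1 : (ℙ : Measure Ω) {ω | t < |Y j ω|} ≤ 1 := prob_le_one
        rw [hcompl, prob_compl_eq_one_sub hsetmeas]
        rw [ENNReal.toReal_sub_of_le hle1 ENNReal.one_ne_top]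
        have h5 : ((N:ℝ)⁻¹ / 2) ≤ ((ℙ : Measure Ω) {ω | t < |Y j ω|}).toReal := by
          have := ENNReal.toReal_mono (measure_ne_top _ _) htail
          rwa [ENNReal.toReal_ofReal (by positivity)] at this
        have : (1 : ℝ≥0∞).toReal = (1:ℝ) := by simp
        rw [this]
        have hNinv : (N:ℝ)⁻¹ / 2 = 1/(2*N) := by field_simp
        linarith [hNinv ▸ h5]
      -- product bound
      have hq0 : (0:ℝ) ≤ 1 - 1/(2*N) := by
        have : 1/(2*(N:ℝ)) ≤ 1/2 := by
          apply div_le_div_of_nonneg_left <;> linarith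
        linarith
      have hprodR : ((ℙ : Measure Ω) (⋂ j, B j)).toReal ≤ Real.exp (-(1/2)) := by
        rw [hprod, ENNReal.toReal_prod]
        have h1 : ∏ j : Fin N, ((ℙ : Measure Ω) (B j)).toReal
            ≤ ∏ _j : Fin N, (1 - 1/(2*(N:ℝ))) :=
          Finset.prod_le_prod (fun j _ => ENNReal.toReal_nonneg) (fun j _ => hsingle j)
        have h2 : ∏ _j : Fin N, (1 - 1/(2*(N:ℝ))) = (1 - 1/(2*(N:ℝ))) ^ N := by
          rw [Finset.prod_const, Finset.card_univ, Fintype.card_fin]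
        have h3 : (1 - 1/(2*(N:ℝ))) ^ N ≤ Real.exp (-(1/(2*(N:ℝ)))) ^ N := by
          apply pow_le_pow_left₀ hq0
          linarith [Real.add_one_le_exp (-(1/(2*(N:ℝ))))]
        have h4 : Real.exp (-(1/(2*(N:ℝ)))) ^ N = Real.exp (-(1/2)) := by
          rw [← Real.exp_nat_mul]
          congr 1
          field_simp
        linarith [h1, h2 ▸ h1, h3, h4 ▸ h3]
      -- the complement event
      set A : Set Ω := (⋂ j, B j)ᶜ with hAdef
      have hAmeas : MeasurableSet A := (MeasurableSet.iInter fun j => hBmeas j).compl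
      have hPA : (1:ℝ)/3 ≤ ((ℙ : Measure Ω) A).toReal := by
        rw [hAdef, prob_compl_eq_one_sub (MeasurableSet.iInter fun j => hBmeas j)]
        rw [ENNReal.toReal_sub_of_le prob_le_one ENNReal.one_ne_top]
        have hexph : Real.exp (-(1/2 : ℝ)) ≤ 2/3 := by
          rw [Real.exp_neg]
          rw [inv_le_comm₀ (Real.exp_pos _) (by norm_num)]
          linarith [Real.add_one_le_exp (1/2 : ℝ)]
        have : (1 : ℝ≥0∞).toReal = (1:ℝ) := by simp
        rw [this]
        linarith [hprodR]
      -- pointwise bound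
      have hpoint : ∀ ω, A.indicator (fun _ => t) ω ≤ F ω := by
        intro ω
        by_cases hω : ω ∈ A
        · rw [Set.indicator_of_mem hω]
          have hω' : ∃ j, ω ∉ B j := by
            by_contra hc
            push_neg at hc
            exact hω (Set.mem_iInter.2 hc)
          obtain ⟨j, hj⟩ := hω'
          have h5 : t < |Y j ω| := by
            by_contra hc
            push_neg at hc
            exact hj (by simp only [hBdef, Set.mem_preimage, Set.mem_Icc]; exact abs_le.1 hc)
          have h6 : |Y j ω| ≤ S j ω :=
            Finset.single_le_sum (f := fun i => |X (i, j) ω|)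
              (fun i _ => abs_nonneg _) (Finset.mem_univ i0)
          linarith [hFge j ω]
        · rw [Set.indicator_of_notMem hω]
          exact hFnn ω
      have hindint : Integrable (A.indicator (fun _ => t)) ℙ :=
        (integrable_const t).indicator hAmeas
      have h7 := integral_mono hindint hFint hpoint
      rw [integral_indicator_const _ hAmeas] at h7
      have h8 : t * (1/3) ≤ t * ((ℙ : Measure Ω) A).toReal :=
        mul_le_mul_of_nonneg_left hPA ht0
      rw [smul_eq_mul, mul_comm] at h7
      have h7' : t * ((ℙ : Measure Ω) A).toReal ≤ I := h7
      linarith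
    -- combine
    have ha : (n:ℝ) ≤ κ * I := by
      rw [div_le_iff₀ hκ0] at hlow1; linarith [hlow1]
    have hb : Real.log N ≤ 3 * (κ * I) := by
      have h1 : t ≤ 3 * I := by linarith
      have h2 : t * κ ≤ 3 * I * κ := mul_le_mul_of_nonneg_right h1 hκ0.le
      have h3 : t * κ = Real.log N := by rw [htdef]; field_simp
      linarith [h3 ▸ h2]
    have hc : κ * I ≤ 1.5 * I := mul_le_mul_of_nonneg_right hκ15 hI0
    rw [hIdef] at *
    nlinarith [ha, hb, hc]
  · -- UPPER BOUND
    set lam : ℝ := κ / 2 with hlamdef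
    have hlam0 : 0 < lam := by positivity
    set T : ℝ := κ * ((n:ℝ) * Real.log 2 + Real.log N) with hTdef
    have hT0 : 0 ≤ T := by
      apply mul_nonneg hκ0.le
      have : 0 ≤ (n:ℝ) * Real.log 2 := by positivity
      linarith
    -- per-column exponential moment
    have hcol : ∀ j : Fin N, Integrable (fun ω => Real.exp (lam * S j ω)) ℙ ∧
        (∫ ω, Real.exp (lam * S j ω) ∂ℙ) = 2 ^ n := by
      intro j
      set Y : Fin n → Ω → ℝ := fun i ω => |X (i, j) ω| with hYdef
      have hYmeas : ∀ i, Measurable (Y i) := fun i => (hXmeas (i, j)).abs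
      have hYind : iIndepFun Y ℙ := by
        have h1 := ExpAux.iIndepFun_precomp hXind (fun i : Fin n => (i, j))
          (fun a b hab => congrArg Prod.fst hab)
        exact h1.comp (fun _ x => |x|) (fun _ => measurable_abs)
      have hYint : ∀ i, Integrable (fun ω => Real.exp (lam * Y i ω)) ℙ := by
        intro i
        have := ExpAux.exp_abs_integrable (hXmeas (i, j)) (hXmap (i, j))
        simpa [hYdef, hlamdef, hκdef] using this
      have hsum : ∀ ω, S j ω = (∑ i, Y i) ω := fun ω => by
        rw [Finset.sum_apply]
      have heqfun : (fun ω => Real.exp (lam * S j ω))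
          = fun ω => Real.exp (lam * (∑ i, Y i) ω) := by
        funext ω; rw [hsum ω]
      constructor
      · rw [heqfun]
        exact hYind.integrable_exp_mul_sum hYmeas (fun i _ => hYint i)
      · rw [heqfun]
        have hmgf := hYind.mgf_sum (t := lam) hYmeas Finset.univ
        have hval : ∀ i : Fin n, mgf (Y i) ℙ lam = 2 := by
          intro i
          have := ExpAux.exp_abs_integral (hXmeas (i, j)) (hXmap (i, j))
          rw [mgf]
          simpa [hYdef, hlamdef, hκdef] using this
        have : mgf (∑ i, Y i) ℙ lam = 2 ^ n := by
          rw [hmgf, Finset.prod_congr rfl (fun i _ => hval i), Finset.prod_const,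
            Finset.card_univ, Fintype.card_fin]
        rw [← this]
        rfl
    -- pointwise bound
    set c : ℝ := (1/lam) * Real.exp (-(lam * T)) with hcdef
    have hc0 : 0 < c := by positivity
    have hpoint : ∀ ω, F ω ≤ T + c * ∑ j, Real.exp (lam * S j ω) := by
      intro ω
      refine ciSup_le fun j => ?_
      have h1 : lam * (S j ω - T) ≤ Real.exp (lam * (S j ω - T)) := by
        linarith [Real.add_one_le_exp (lam * (S j ω - T))]
      have h2 : S j ω - T ≤ (1/lam) * Real.exp (lam * (S j ω - T)) := by
        have h3 := mul_le_mul_of_nonneg_left h1 (le_of_lt (one_div_pos.2 hlam0))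
        calc S j ω - T = (1/lam) * (lam * (S j ω - T)) := by field_simp
        _ ≤ (1/lam) * Real.exp (lam * (S j ω - T)) := h3
      have h4 : (1/lam) * Real.exp (lam * (S j ω - T))
          = c * Real.exp (lam * S j ω) := by
        rw [hcdef, mul_sub, Real.exp_sub, Real.exp_neg]
        ring
      have h5 : c * Real.exp (lam * S j ω) ≤ c * ∑ j', Real.exp (lam * S j' ω) := by
        apply mul_le_mul_of_nonneg_left _ hc0.le
        exact Finset.single_le_sum (f := fun j' => Real.exp (lam * S j' ω))
          (fun j' _ => (Real.exp_pos _).le) (Finset.mem_univ j)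
      linarith [h4 ▸ h2]
    have hRHSint : Integrable (fun ω => T + c * ∑ j, Real.exp (lam * S j ω)) ℙ := by
      refine (integrable_const T).add ?_
      exact (integrable_finset_sum _ fun j _ => (hcol j).1).const_mul c
    have hup := integral_mono_of_nonneg (Filter.Eventually.of_forall hFnn) hRHSint
      (Filter.Eventually.of_forall hpoint)
    have hcalc : ∫ ω, (T + c * ∑ j, Real.exp (lam * S j ω)) ∂ℙ
        = T + c * (N * 2 ^ n) := by
      rw [integral_add (integrable_const T)
        ((integrable_finset_sum _ fun j _ => (hcol j).1).const_mul c)]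
      congr 1
      · simp
      rw [integral_const_mul, integral_finset_sum _ fun j _ => (hcol j).1]
      rw [Finset.sum_congr rfl fun j _ => (hcol j).2, Finset.sum_const,
        Finset.card_univ, Fintype.card_fin]
      push_cast
      ring
    rw [hcalc] at hup
    -- compute c * (N * 2^n) = κ
    have hlamT : lam * T = (n:ℝ) * Real.log 2 + Real.log N := by
      rw [hlamdef, hTdef]
      field_simp
      nlinarith [hκsq]
    have hexpT : Real.exp (-(lam * T)) = ((2:ℝ) ^ n)⁻¹ * (N:ℝ)⁻¹ := by
      rw [hlamT, neg_add, Real.exp_add, Real.exp_neg, Real.exp_neg,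
        Real.exp_nat_mul, Real.exp_log (by norm_num : (0:ℝ) < 2),
        Real.exp_log hNpos]
    have hcval : c * (N * 2 ^ n) = κ := by
      rw [hcdef, hexpT, hlamdef]
      have h2n : (0:ℝ) < 2 ^ n := by positivity
      field_simp
      nlinarith [hκsq]
    rw [hcval] at hup
    -- final numeric bound
    have a1 : 0 ≤ (1.5 - κ) * ((n:ℝ) * Real.log 2) := by
      apply mul_nonneg (by linarith) (by positivity)
    have a2 : 0 ≤ 1.5 * (n:ℝ) * (1 - Real.log 2) := by
      apply mul_nonneg (by positivity) (by linarith)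
    have a3 : 0 ≤ (1.5 - κ) * Real.log N := mul_nonneg (by linarith) hlogN
    rw [hIdef] at *
    have hTval : T = κ * ((n:ℝ) * Real.log 2) + κ * Real.log N := by
      rw [hTdef]; ring
    nlinarith [hup, hTval, a1, a2, a3]
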